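/- Define α(t) = (√(1+8e^t) − 1)/2. Then for every integer r ≥ 1, the r-th derivative of α at t = 0 equals ∑_{k=1}^r (−1)^{k−1} S(r,k) · 2^k (2k−2)! / (3^{2k−1} (k−1)!), where S(r,k) are Stirling numbers of the second kind. -/

import Mathlib

open Real Finset

/-- Stirling numbers of the second kind `S(r,k)`. -/
def stirling2 : ℕ → ℕ → ℕ
  | 0, 0 => 1
  | 0, _ + 1 => 0
  | _ + 1, 0 => 0
  | r + 1, k + 1 => (k + 1) * stirling2 r (k + 1) + stirling2 r k

lemma stirling2_zero {r : ℕ} (hr : 1 ≤ r) : stirling2 r 0 = 0 := by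
  cases r with
  | zero => omega
  | succ n => rfl

lemma stirling2_eq_zero : ∀ r k : ℕ, r < k → stirling2 r k = 0 := by
  intro r
  induction r with
  | zero => intro k hk; cases k with
    | zero => omega
    | succ n => rfl
  | succ n ih =>
    intro k hk
    cases k with
    | zero => omega
    | succ m =>
      show (m + 1) * stirling2 n (m + 1) + stirling2 n m = 0
      rw [ih (m+1) (by omega), ih m (by omega)]
      ring

/-- coefficient `c k = (1/2)·(1/2)(1/2−1)⋯(1/2−k+1)·8^k`. -/
noncomputable def cc : ℕ → ℝ
  | 0 => 1/2
  | k+1 => cc k * 8 * (1/2 - k)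

/-- `F k t = c k · e^{kt} · (1+8eᵗ)^{1/2−k}`, so that `(d/dt)^r α = ∑ S(r,k) F k`. -/
noncomputable def FF (k : ℕ) (t : ℝ) : ℝ :=
  cc k * Real.exp (k * t) * (1 + 8 * Real.exp t) ^ ((1:ℝ)/2 - k)

lemma base_pos (t : ℝ) : (0:ℝ) < 1 + 8 * Real.exp t := by positivity

lemma hasDerivAt_FF (k : ℕ) (t : ℝ) :
    HasDerivAt (FF k) ((k:ℝ) * FF k t + FF (k+1) t) t := by
  have h1 : HasDerivAt (fun t : ℝ => Real.exp ((k:ℝ) * t))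
      (Real.exp ((k:ℝ) * t) * (k:ℝ)) t := by
    simpa using (HasDerivAt.exp ((hasDerivAt_id t).const_mul (k:ℝ)))
  have h2 : HasDerivAt (fun t : ℝ => 1 + 8 * Real.exp t) (8 * Real.exp t) t :=
    ((Real.hasDerivAt_exp t).const_mul 8).const_add 1
  have h3 : HasDerivAt (fun t : ℝ => (1 + 8 * Real.exp t) ^ ((1:ℝ)/2 - k))
      (8 * Real.exp t * ((1:ℝ)/2 - k) * (1 + 8 * Real.exp t) ^ ((1:ℝ)/2 - k - 1)) t :=
    h2.rpow_const (Or.inl (base_pos t).ne')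
  have h4 := (h1.mul h3).const_mul (cc k)
  have he : ((1:ℝ)/2 - (k:ℝ)) - 1 = (1:ℝ)/2 - ((k+1 : ℕ):ℝ) := by push_cast; ring
  have hexp : Real.exp (((k:ℕ)+1 : ℕ) * t) = Real.exp ((k:ℝ) * t) * Real.exp t := by
    rw [← Real.exp_add]; push_cast; ring_nf
  convert h4 using 1
  · rfl
  · rfl
  · ext t; simp [FF]; ring
  · simp only [FF, cc, he, hexp]
    push_cast
    ring

lemma deriv_FF (k : ℕ) : deriv (FF k) = fun t => (k:ℝ) * FF k t + FF (k+1) t := by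
  ext t; exact (hasDerivAt_FF k t).deriv

/-- α as rpow -/
noncomputable def al : ℝ → ℝ := fun t => ((1 + 8 * Real.exp t) ^ ((1:ℝ)/2) - 1) / 2

lemma hasDerivAt_al (t : ℝ) : HasDerivAt al (FF 1 t) t := by
  have h2 : HasDerivAt (fun t : ℝ => 1 + 8 * Real.exp t) (8 * Real.exp t) t :=
    ((Real.hasDerivAt_exp t).const_mul 8).const_add 1
  have h3 : HasDerivAt (fun t : ℝ => (1 + 8 * Real.exp t) ^ ((1:ℝ)/2))
      (8 * Real.exp t * ((1:ℝ)/2) * (1 + 8 * Real.exp t) ^ ((1:ℝ)/2 - 1)) t :=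
    h2.rpow_const (Or.inl (base_pos t).ne')
  have h4 := (h3.sub_const 1).div_const 2
  convert h4 using 1
  · rfl
  · rfl
  · rfl
  simp only [FF, cc]
  norm_num
  ring

lemma iterderiv_al (r : ℕ) (hr : 1 ≤ r) :
    iteratedDeriv r al = fun t => ∑ k ∈ Finset.range r, (stirling2 r (k+1) : ℝ) * FF (k+1) t := by
  induction r with
  | zero => omega
  | succ n ih =>
    rcases Nat.eq_or_lt_of_le hr with h1 | h1
    · -- n + 1 = 1
      have hn : n = 0 := by omega
      subst hn
      rw [iteratedDeriv_one]
      ext t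
      rw [(hasDerivAt_al t).deriv]
      show FF 1 t = ∑ k ∈ Finset.range 1, (stirling2 1 (k+1) : ℝ) * FF (k+1) t
      simp [stirling2]
    · have hn : 1 ≤ n := by omega
      rw [iteratedDeriv_succ, ih hn]
      ext t
      have hder : HasDerivAt (fun t => ∑ k ∈ Finset.range n, (stirling2 n (k+1) : ℝ) * FF (k+1) t)
          (∑ k ∈ Finset.range n, (stirling2 n (k+1) : ℝ) *
            (((k:ℝ)+1) * FF (k+1) t + FF (k+2) t)) t := by
        apply HasDerivAt.fun_sum
        intro k _
        have := (hasDerivAt_FF (k+1) t).const_mul ((stirling2 n (k+1) : ℝ))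
        convert this using 1
        · rfl
        push_cast; ring
      rw [hder.deriv]
      -- now algebra with stirling recurrence
      have key : ∀ k : ℕ, (stirling2 (n+1) (k+1) : ℝ) =
          ((k:ℝ)+1) * stirling2 n (k+1) + stirling2 n k := by
        intro k
        show ((((k+1) * stirling2 n (k+1) + stirling2 n k : ℕ)) : ℝ) = _
        push_cast; ring
      calc ∑ k ∈ Finset.range n, (stirling2 n (k+1) : ℝ) *
            (((k:ℝ)+1) * FF (k+1) t + FF (k+2) t)
          = (∑ k ∈ Finset.range n, ((k:ℝ)+1) * stirling2 n (k+1) * FF (k+1) t)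
            + ∑ k ∈ Finset.range n, (stirling2 n (k+1) : ℝ) * FF (k+2) t := by
            rw [← Finset.sum_add_distrib]; congr 1; ext k; ring
        _ = (∑ k ∈ Finset.range (n+1), ((k:ℝ)+1) * stirling2 n (k+1) * FF (k+1) t)
            + ∑ k ∈ Finset.range (n+1), (stirling2 n k : ℝ) * FF (k+1) t := by
            rw [Finset.sum_range_succ, Finset.sum_range_succ']
            rw [stirling2_eq_zero n (n+1) (by omega), stirling2_zero hn]
            simp
        _ = ∑ k ∈ Finset.range (n+1), (stirling2 (n+1) (k+1) : ℝ) * FF (k+1) t := by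
            rw [← Finset.sum_add_distrib]
            congr 1; ext k; rw [key]; ring

lemma cc_succ (k : ℕ) : cc (k+1) = (-1:ℝ)^k * 2^(k+1) * (Nat.factorial (2*k)) / (Nat.factorial k) := by
  induction k with
  | zero => simp [cc]; norm_num
  | succ n ih =>
    rw [show cc (n+1+1) = cc (n+1) * 8 * (1/2 - ((n+1:ℕ):ℝ)) from rfl, ih]
    push_cast
    have h2 : (Nat.factorial (2*(n+1)) : ℝ) = (2*n+2) * (2*n+1) * Nat.factorial (2*n) := by
      have : 2*(n+1) = (2*n+1) + 1 := by ring
      rw [this, Nat.factorial_succ]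
      push_cast [Nat.factorial_succ]
      ring
    have h3 : (Nat.factorial (n+1) : ℝ) = (n+1) * Nat.factorial n := by
      push_cast [Nat.factorial_succ]; ring
    rw [h2, h3]
    have hn : (Nat.factorial n : ℝ) ≠ 0 := by positivity
    have hn1 : ((n:ℝ)+1) ≠ 0 := by positivity
    field_simp
    ring

lemma nine_rpow (k : ℕ) : (9:ℝ) ^ ((1:ℝ)/2 - ((k:ℕ)+1:ℕ)) = 1 / (3 ^ (2*k+1)) := by
  have h9 : (9:ℝ) = 3^(2:ℕ) := by norm_num
  have : ((1:ℝ)/2 - ((k:ℕ)+1:ℕ)) = -(((2*k+1 : ℕ):ℝ)/2) := by push_cast; ring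
  rw [this, h9, ← Real.rpow_natCast (3:ℝ) 2, ← Real.rpow_mul (by norm_num)]
  rw [show ((2:ℕ):ℝ) * -(((2*k+1:ℕ):ℝ)/2) = -((2*k+1:ℕ):ℝ) by push_cast; ring]
  rw [Real.rpow_neg (by norm_num), Real.rpow_natCast]
  simp

lemma FF_eval (k : ℕ) : FF (k+1) 0 =
    (-1:ℝ)^k * 2^(k+1) * (Nat.factorial (2*k)) / (3^(2*k+1) * Nat.factorial k) := by
  have h0 : (1 + 8 * Real.exp 0 : ℝ) = 9 := by norm_num
  rw [FF, h0, nine_rpow k, mul_zero, Real.exp_zero, mul_one, cc_succ]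
  have hn : (Nat.factorial k : ℝ) ≠ 0 := by positivity
  field_simp

theorem alpha_iteratedDeriv_at_zero (r : ℕ) (hr : 1 ≤ r) :
    iteratedDeriv r (fun t : ℝ => (Real.sqrt (1 + 8 * Real.exp t) - 1) / 2) 0
      = ∑ k ∈ Finset.Icc 1 r,
          (-1 : ℝ) ^ (k - 1) * (stirling2 r k) * 2 ^ k * (Nat.factorial (2 * k - 2))
            / (3 ^ (2 * k - 1) * (Nat.factorial (k - 1))) := by
  have hfun : (fun t : ℝ => (Real.sqrt (1 + 8 * Real.exp t) - 1) / 2) = al := by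
    ext t; rw [al, Real.sqrt_eq_rpow]
  rw [hfun, iterderiv_al r hr]
  show (∑ k ∈ Finset.range r, (stirling2 r (k+1):ℝ) * FF (k+1) 0) = _
  rw [← Finset.Ico_add_one_right_eq_Icc, Finset.sum_Ico_eq_sum_range]
  norm_num
  apply Finset.sum_congr rfl
  intro k _
  rw [show 1 + k = k + 1 by ring, FF_eval]
  rw [show 2 * (k+1) - 2 = 2*k by omega, show 2 * (k+1) - 1 = 2*k+1 by omega]
  ring
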